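/- Let n ≥ 1, 0 < s < s̃, 0 < a < b, and let t₀ > s be the unique radius with η′_{t₀}(t₀)=0 for the two-parameter family η_t(r)=A_t rⁿ + B_t r⁻ⁿ interpolating η_t(s)=b, η_t(t)=a. If t₀ ≥ s̃, then η_{s̃} is nonincreasing on [s,s̃]; the function g̃ defined by g̃ = η_{s̃} (if t₀ ≥ s̃), or g̃ = η_{t₀} on [s,t₀] and g̃ ≡ a on [t₀,s̃] (if t₀ < s̃), is the unique minimizer of Ĩ(g) = ∫_s^{s̃} (g′ + (n/r)g)² r dr over 𝒞₁ = {g ∈ W^{1,2}([s,s̃]) : g(s)=b, g(s̃)=a, g′ ≤ 0}. -/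

import Mathlib

open MeasureTheory Real Set Filter Topology

noncomputable section

/-- The interpolating family `η_t(r) = A_t rⁿ + B_t r⁻ⁿ` with `η_t(s) = b`,
`η_t(t) = a`. -/
def eta (n : ℕ) (s a b t : ℝ) (r : ℝ) : ℝ :=
  (a * t ^ n - b * s ^ n) / (t ^ (2 * n) - s ^ (2 * n)) * r ^ (n : ℤ)
    + s ^ n * t ^ n * (b * t ^ n - a * s ^ n) / (t ^ (2 * n) - s ^ (2 * n)) * r ^ (-(n : ℤ))

/-- The admissible class `𝒞₁` on `[s, st]`: absolutely continuous `g` with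
square-integrable derivative `G ≤ 0`, `g(s) = b`, `g(st) = a`. -/
def Adm1 (s st a b : ℝ) (g G : ℝ → ℝ) : Prop :=
  (∀ x ∈ Set.Icc s st, g x = b + ∫ t in s..x, G t) ∧
  IntervalIntegrable G volume s st ∧
  IntervalIntegrable (fun r => (G r) ^ 2) volume s st ∧
  g s = b ∧ g st = a ∧ (∀ x ∈ Set.Icc s st, G x ≤ 0)

/-- The functional `Ĩ(g) = ∫_s^{st} (g′ + (n/r)g)² r dr`. -/
def Itilde (n : ℕ) (s st : ℝ) (g G : ℝ → ℝ) : ℝ :=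
  ∫ r in s..st, (G r + (n : ℝ) / r * g r) ^ 2 * r

def etaA (n : ℕ) (s a b t : ℝ) : ℝ := (a * t ^ n - b * s ^ n) / (t ^ (2 * n) - s ^ (2 * n))
def etaB (n : ℕ) (s a b t : ℝ) : ℝ :=
  s ^ n * t ^ n * (b * t ^ n - a * s ^ n) / (t ^ (2 * n) - s ^ (2 * n))

lemma eta_eq (n : ℕ) (s a b t r : ℝ) :
    eta n s a b t r = etaA n s a b t * r ^ (n : ℤ) + etaB n s a b t * r ^ (-(n : ℤ)) := rfl

def etaD (n : ℕ) (s a b t : ℝ) (r : ℝ) : ℝ :=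
  (n : ℝ) * (etaA n s a b t * r ^ ((n : ℤ) - 1) - etaB n s a b t * r ^ (-(n : ℤ) - 1))

lemma hasDerivAt_eta {n : ℕ} {s a b t r : ℝ} (hr : r ≠ 0) :
    HasDerivAt (eta n s a b t) (etaD n s a b t r) r := by
  have h1 := (hasDerivAt_zpow (n : ℤ) r (Or.inl hr)).const_mul (etaA n s a b t)
  have h2 := (hasDerivAt_zpow (-(n : ℤ)) r (Or.inl hr)).const_mul (etaB n s a b t)
  have h := h1.add h2
  refine HasDerivAt.congr_deriv h ?_
  unfold etaD
  push_cast
  ring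

variable {n : ℕ} {s a b t r : ℝ}

lemma denom_pos (hn : 1 ≤ n) (hs : 0 < s) (hst : s < t) :
    0 < t ^ (2 * n) - s ^ (2 * n) := by
  have := pow_lt_pow_left₀ hst hs.le (n := 2 * n) (by omega)
  linarith

lemma eta_at_s (hn : 1 ≤ n) (hs : 0 < s) (hst : s < t) : eta n s a b t s = b := by
  have hD := denom_pos hn hs hst
  have hsn : s ^ n ≠ 0 := by positivity
  rw [eta_eq, etaA, etaB, zpow_natCast, zpow_neg, zpow_natCast]
  field_simp
  ring

lemma eta_at_t (hn : 1 ≤ n) (hs : 0 < s) (hst : s < t) : eta n s a b t t = a := by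
  have hD := denom_pos hn hs hst
  have ht : 0 < t := hs.trans hst
  have htn : t ^ n ≠ 0 := by positivity
  rw [eta_eq, etaA, etaB, zpow_natCast, zpow_neg, zpow_natCast]
  field_simp
  ring

variable {t₀ : ℝ}

lemma etaD_eq_zero_of_crit (ht0 : t₀ ≠ 0) (hcrit : deriv (eta n s a b t₀) t₀ = 0) :
    etaD n s a b t₀ t₀ = 0 := by
  rw [← (hasDerivAt_eta ht0).deriv]; exact hcrit

lemma crit_AB (hn : 1 ≤ n) (ht0 : 0 < t₀) (hc : etaD n s a b t₀ t₀ = 0) :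
    etaA n s a b t₀ * t₀ ^ (2 * n) = etaB n s a b t₀ := by
  have hn' : (n:ℝ) ≠ 0 := by positivity
  have h : etaA n s a b t₀ * t₀ ^ ((n:ℤ)-1) = etaB n s a b t₀ * t₀ ^ (-(n:ℤ)-1) := by
    unfold etaD at hc
    rcases mul_eq_zero.mp hc with h | h
    · exact absurd h hn'
    · linarith [sub_eq_zero.mp h]
  calc etaA n s a b t₀ * t₀ ^ (2*n)
      = (etaA n s a b t₀ * t₀ ^ ((n:ℤ)-1)) * t₀ ^ ((n:ℤ)+1) := by
        rw [mul_assoc, ← zpow_add₀ ht0.ne', ← zpow_natCast t₀ (2*n)]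
        congr 1; push_cast; ring
    _ = (etaB n s a b t₀ * t₀ ^ (-(n:ℤ)-1)) * t₀ ^ ((n:ℤ)+1) := by rw [h]
    _ = etaB n s a b t₀ := by
        rw [mul_assoc, ← zpow_add₀ ht0.ne']; norm_num

lemma key_scalar (hn : 1 ≤ n) (hs : 0 < s) (hst : s < t₀)
    (hAB : etaA n s a b t₀ * t₀ ^ (2*n) = etaB n s a b t₀) :
    a * (t₀^n)^2 + a * (s^n)^2 = 2*b*(s^n)*(t₀^n) := by
  have hD := denom_pos hn hs hst (t := t₀)
  have ht0 : 0 < t₀ := hs.trans hst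
  have hu : (0:ℝ) < t₀^n := pow_pos ht0 n
  have E : (a * t₀^n - b * s^n) * t₀^(2*n) = s^n * t₀^n * (b*t₀^n - a*s^n) := by
    unfold etaA etaB at hAB
    field_simp at hAB
    linarith
  rw [two_mul, pow_add] at E
  have h2 : t₀^n * (a*(t₀^n)^2 + a*(s^n)^2) = t₀^n * (2*b*(s^n)*(t₀^n)) := by
    linear_combination E
  exact mul_left_cancel₀ hu.ne' h2

lemma two_A (hn : 1 ≤ n) (hs : 0 < s) (hst : s < t₀)
    (hAB : etaA n s a b t₀ * t₀ ^ (2*n) = etaB n s a b t₀) :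
    2 * etaA n s a b t₀ * t₀^n = a := by
  have ht0 : 0 < t₀ := hs.trans hst
  have hu : (0:ℝ) < t₀^n := pow_pos ht0 n
  have h := eta_at_t hn hs hst (a := a) (b := b)
  rw [eta_eq, zpow_natCast, zpow_neg, zpow_natCast, ← hAB, two_mul, pow_add] at h
  field_simp at h
  have h2 : (2 * etaA n s a b t₀ * t₀^n) * t₀^n = a * t₀^n := by linear_combination t₀^n * h
  exact mul_right_cancel₀ hu.ne' h2

lemma quad_nonpos {v u u₀ : ℝ} (ha : 0 < a) (hv : 0 < v) (hvu : v < u) (huu : u ≤ u₀)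
    (hkey : a*u₀^2 + a*v^2 = 2*b*v*u₀) : a*u^2 + a*v^2 ≤ 2*b*v*u := by
  have h1 : v^2 ≤ u₀*u := by nlinarith
  nlinarith [mul_nonneg (mul_nonneg ha.le (sub_nonneg.2 huu)) (sub_nonneg.2 h1)]

lemma etaB_pos (hn : 1 ≤ n) (hs : 0 < s) (hst : s < t) (ha : 0 < a) (hab : a < b) :
    0 < etaB n s a b t := by
  have hD := denom_pos hn hs hst (t := t)
  have hv : (0:ℝ) < s^n := pow_pos hs n
  have hvu : s^n < t^n := pow_lt_pow_left₀ hst hs.le (by omega)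
  have hu : (0:ℝ) < t^n := pow_pos (hs.trans hst) n
  apply div_pos _ hD
  have h1 : a * s^n < b * t^n := by nlinarith
  nlinarith [mul_pos hv hu]

lemma etaD_nonpos (hn : 1 ≤ n) (hs : 0 < s) (hst : s < t) (ha : 0 < a) (hab : a < b)
    (htt0 : t ≤ t₀)
    (hkey : a * (t₀^n)^2 + a * (s^n)^2 = 2*b*(s^n)*(t₀^n))
    (hr : r ∈ Icc s t) : etaD n s a b t r ≤ 0 := by
  have hr0 : 0 < r := lt_of_lt_of_le hs hr.1
  have hv : (0:ℝ) < s^n := pow_pos hs n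
  have hvu : s^n < t^n := pow_lt_pow_left₀ hst hs.le (by omega)
  have huu0 : t^n ≤ t₀^n := pow_le_pow_left₀ (hs.trans hst).le htt0 n
  have hq : a*(t^n)^2 + a*(s^n)^2 ≤ 2*b*(s^n)*(t^n) :=
    quad_nonpos ha hv hvu huu0 hkey
  have hD := denom_pos hn hs hst (t := t)
  have hB := etaB_pos hn hs hst ha hab
  have hu : (0:ℝ) < t^n := pow_pos (hs.trans hst) n
  have hMain : etaA n s a b t * r^(2*n) ≤ etaB n s a b t := by
    rcases le_or_gt (etaA n s a b t) 0 with hA | hA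
    · have := mul_nonpos_of_nonpos_of_nonneg hA (pow_nonneg hr0.le (2*n))
      linarith
    · have h1 : r^(2*n) ≤ t^(2*n) := pow_le_pow_left₀ hr0.le hr.2 _
      have h2 : etaA n s a b t * t^(2*n) ≤ etaB n s a b t := by
        unfold etaA etaB
        rw [div_mul_eq_mul_div, div_le_div_iff_of_pos_right hD, two_mul, pow_add]
        nlinarith [mul_le_mul_of_nonneg_left hq hu.le]
      calc etaA n s a b t * r^(2*n) ≤ etaA n s a b t * t^(2*n) :=
            mul_le_mul_of_nonneg_left h1 hA.le
        _ ≤ etaB n s a b t := h2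
  have hfin : etaA n s a b t * r^((n:ℤ)-1) ≤ etaB n s a b t * r^(-(n:ℤ)-1) := by
    have e : r^((n:ℤ)-1) = r^(2*n) * r^(-(n:ℤ)-1) := by
      rw [← zpow_natCast r (2*n), ← zpow_add₀ hr0.ne']
      congr 1; push_cast; ring
    rw [e, ← mul_assoc]
    exact mul_le_mul_of_nonneg_right hMain (zpow_nonneg hr0.le _)
  exact mul_nonpos_of_nonneg_of_nonpos (Nat.cast_nonneg n) (sub_nonpos.mpr hfin)

lemma etaD_add_eq (hr : r ≠ 0) :
    etaD n s a b t r + (n:ℝ)/r * eta n s a b t r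
      = 2*(n:ℝ)*etaA n s a b t * r^((n:ℤ)-1) := by
  rw [eta_eq]
  unfold etaD
  have e1 : r ^ (n:ℤ) = r^((n:ℤ)-1) * r := by rw [← zpow_add_one₀ hr]; congr 1; ring
  have e2 : r ^ (-(n:ℤ)) = r^(-(n:ℤ)-1) * r := by rw [← zpow_add_one₀ hr]; congr 1; ring
  rw [e1, e2]
  field_simp
  ring

lemma swap_lemma (s b' : ℝ) (hsb : s ≤ b') (χ w : ℝ → ℝ)
    (hχ : IntervalIntegrable χ volume s b') (hw : Continuous w) :
    ∫ r in s..b', w r * (∫ t in s..r, χ t) = ∫ t in s..b', (∫ r in t..b', w r) * χ t := by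
  set μ := volume.restrict (Ioc s b') with hμ
  have hχi : Integrable χ μ := hχ.1
  have hwi : Integrable w μ := hw.integrableOn_Ioc
  set f : ℝ → ℝ → ℝ := fun r t => if t ≤ r then w r * χ t else 0 with hf
  have hind : Function.uncurry f =
      Set.indicator {p : ℝ × ℝ | p.2 ≤ p.1} (fun p => w p.1 * χ p.2) := by
    funext p
    simp [hf, Function.uncurry, Set.indicator_apply, Set.mem_setOf_eq]
  have hFi : Integrable (Function.uncurry f) (μ.prod μ) := by
    rw [hind]
    exact (hwi.mul_prod hχi).indicator (measurableSet_le measurable_snd measurable_fst)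
  have swap := MeasureTheory.integral_integral_swap hFi
  have hL : (∫ r, (∫ t, f r t ∂μ) ∂μ) = ∫ r in s..b', w r * (∫ t in s..r, χ t) := by
    rw [intervalIntegral.integral_of_le hsb, hμ]
    apply MeasureTheory.setIntegral_congr_fun measurableSet_Ioc
    intro r hr
    show (∫ t, f r t ∂μ) = w r * ∫ t in s..r, χ t
    have e1 : (fun t => f r t) = Set.indicator (Iic r) (fun t => w r * χ t) := by
      funext t; simp [hf, Set.indicator_apply]
    rw [e1, MeasureTheory.integral_indicator measurableSet_Iic, hμ,
      MeasureTheory.Measure.restrict_restrict measurableSet_Iic]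
    have e2 : Iic r ∩ Ioc s b' = Ioc s r := by
      ext t
      simp only [mem_inter_iff, mem_Iic, mem_Ioc]
      exact ⟨fun h => ⟨h.2.1, h.1⟩, fun h => ⟨h.2, h.1, h.2.trans hr.2⟩⟩
    rw [e2, MeasureTheory.integral_const_mul, intervalIntegral.integral_of_le hr.1.le]
  have hR : (∫ t, (∫ r, f r t ∂μ) ∂μ) = ∫ t in s..b', (∫ r in t..b', w r) * χ t := by
    rw [intervalIntegral.integral_of_le hsb, hμ]
    apply MeasureTheory.setIntegral_congr_fun measurableSet_Ioc
    intro t ht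
    show (∫ r, f r t ∂μ) = (∫ r in t..b', w r) * χ t
    have e1 : (fun r => f r t) = Set.indicator (Ici t) (fun r => w r * χ t) := by
      funext r; simp [hf, Set.indicator_apply]
    rw [e1, MeasureTheory.integral_indicator measurableSet_Ici, hμ,
      MeasureTheory.Measure.restrict_restrict measurableSet_Ici]
    have e2 : Ici t ∩ Ioc s b' = Icc t b' := by
      ext r
      simp only [mem_inter_iff, mem_Ici, mem_Ioc, mem_Icc]
      exact ⟨fun h => ⟨h.1, h.2.2⟩, fun h => ⟨h.1, ht.1.trans_le h.1, h.2⟩⟩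
    rw [e2, MeasureTheory.integral_Icc_eq_integral_Ioc,
      MeasureTheory.integral_mul_const, intervalIntegral.integral_of_le ht.2]
  rw [← hL, ← hR]
  exact swap

lemma ibp_pow (n : ℕ) (hn : 1 ≤ n) {s b' : ℝ} (hsb : s ≤ b') (χ : ℝ → ℝ)
    (hχ : IntervalIntegrable χ volume s b') :
    ∫ r in s..b', (r^n * χ r + (n:ℝ) * r^(n-1) * (∫ t in s..r, χ t))
      = b'^n * ∫ t in s..b', χ t := by
  have hw : Continuous (fun r : ℝ => (n:ℝ) * r^(n-1)) := by continuity
  have hswap := swap_lemma s b' hsb χ (fun r : ℝ => (n:ℝ) * r^(n-1)) hχ hw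
  have hWint : ∀ t : ℝ, (∫ r in t..b', (n:ℝ) * r^(n-1)) = b'^n - t^n := by
    intro t
    rw [intervalIntegral.integral_const_mul, integral_pow]
    have : n - 1 + 1 = n := by omega
    rw [this]
    field_simp
    rw [Nat.cast_sub hn, Nat.cast_one]; ring
  have hi1 : IntervalIntegrable (fun r => r^n * χ r) volume s b' :=
    hχ.continuousOn_mul (by fun_prop)
  have hi2 : IntervalIntegrable (fun r => (n:ℝ) * r^(n-1) * (∫ t in s..r, χ t)) volume s b' := by
    apply ContinuousOn.intervalIntegrable
    exact (hw.continuousOn).mul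
      (intervalIntegral.continuousOn_primitive_interval' hχ left_mem_uIcc)
  have e3 : (fun t => (∫ r in t..b', (n:ℝ)*r^(n-1)) * χ t) = fun t => (b'^n - t^n) * χ t :=
    funext fun t => by rw [hWint]
  have split : ∫ t in s..b', (b'^n - t^n) * χ t
      = b'^n * (∫ t in s..b', χ t) - ∫ t in s..b', t^n * χ t := by
    rw [← intervalIntegral.integral_const_mul, ← intervalIntegral.integral_sub
      (hχ.const_mul _) hi1]
    exact intervalIntegral.integral_congr (fun x _ => by ring)
  rw [intervalIntegral.integral_add hi1 hi2, hswap, e3, split]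
  ring

lemma adm_continuousOn {s st a b : ℝ} {g G : ℝ → ℝ} (hsst : s ≤ st)
    (hg : Adm1 s st a b g G) : ContinuousOn g (Icc s st) := by
  have hprim := intervalIntegral.continuousOn_primitive_interval'
    (μ := volume) (f := G) hg.2.1 left_mem_uIcc
  rw [uIcc_of_le hsst] at hprim
  exact ContinuousOn.congr (continuousOn_const.add hprim) hg.1

lemma general_min (n : ℕ) (hn : 1 ≤ n) (s st a b : ℝ) (hs : 0 < s) (hsst : s < st)
    (gt Gt : ℝ → ℝ)
    (hadm : Adm1 s st a b gt Gt)
    (hcontg : ContinuousOn gt (Icc s st))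
    (hcontG : ContinuousOn Gt (Icc s st))
    (hcross : ∀ g G : ℝ → ℝ, Adm1 s st a b g G →
      0 ≤ ∫ r in s..st, (Gt r + (n:ℝ)/r * gt r) *
            ((G r - Gt r) + (n:ℝ)/r * (g r - gt r)) * r) :
    ∀ g G : ℝ → ℝ, Adm1 s st a b g G →
      Itilde n s st gt Gt ≤ Itilde n s st g G ∧
      (Itilde n s st gt Gt = Itilde n s st g G → EqOn g gt (Icc s st)) := by
  intro g G hg
  have huIcc : uIcc s st = Icc s st := uIcc_of_le hsst.le
  obtain ⟨hrep, hGint, hG2int, hgs, hgst, hGle⟩ := hg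
  obtain ⟨hrep', hGint', hG2int', hgs', hgst', hGle'⟩ := hadm
  have hcg : ContinuousOn g (Icc s st) :=
    adm_continuousOn hsst.le ⟨hrep, hGint, hG2int, hgs, hgst, hGle⟩
  have hc1 : ContinuousOn (fun r : ℝ => (n:ℝ)/r) (Icc s st) :=
    continuousOn_const.div continuousOn_id (fun x hx => ne_of_gt (lt_of_lt_of_le hs hx.1))
  have hcψ : ContinuousOn (fun r => Gt r + (n:ℝ)/r * gt r) (Icc s st) :=
    hcontG.add (hc1.mul hcontg)
  have hcφ : ContinuousOn (fun r => g r - gt r) (Icc s st) := hcg.sub hcontg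
  -- `c` is the continuous part of `δ`
  have hcc : ContinuousOn (fun r => -Gt r + (n:ℝ)/r * (g r - gt r)) (Icc s st) :=
    hcontG.neg.add (hc1.mul hcφ)
  -- integrability facts
  have iψδr : IntervalIntegrable
      (fun r => (Gt r + (n:ℝ)/r * gt r) * ((G r - Gt r) + (n:ℝ)/r * (g r - gt r)) * r)
      volume s st := by
    have e : (fun r => (Gt r + (n:ℝ)/r * gt r) * ((G r - Gt r) + (n:ℝ)/r * (g r - gt r)) * r)
        = fun r => G r * ((Gt r + (n:ℝ)/r * gt r) * r)
            + (-Gt r + (n:ℝ)/r * (g r - gt r)) * (Gt r + (n:ℝ)/r * gt r) * r :=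
      funext fun r => by ring
    rw [e]
    apply IntervalIntegrable.add
    · exact hGint.mul_continuousOn (by rw [huIcc]; exact hcψ.mul (continuousOn_id))
    · apply ContinuousOn.intervalIntegrable
      rw [huIcc]; exact (hcc.mul hcψ).mul continuousOn_id
  have iδ2r : IntervalIntegrable
      (fun r => ((G r - Gt r) + (n:ℝ)/r * (g r - gt r))^2 * r) volume s st := by
    have e : (fun r => ((G r - Gt r) + (n:ℝ)/r * (g r - gt r))^2 * r)
        = fun r => (G r)^2 * r
            + (G r * (2 * (-Gt r + (n:ℝ)/r * (g r - gt r)) * r)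
               + (-Gt r + (n:ℝ)/r * (g r - gt r))^2 * r) :=
      funext fun r => by ring
    rw [e]
    apply IntervalIntegrable.add
    · exact hG2int.mul_continuousOn (by rw [huIcc]; exact continuousOn_id)
    · apply IntervalIntegrable.add
      · exact hGint.mul_continuousOn (by
          rw [huIcc]; exact (continuousOn_const.mul hcc).mul continuousOn_id)
      · apply ContinuousOn.intervalIntegrable
        rw [huIcc]; exact ((hcc.pow 2).mul continuousOn_id)
  have iψ2r : IntervalIntegrable (fun r => (Gt r + (n:ℝ)/r * gt r)^2 * r) volume s st := by
    apply ContinuousOn.intervalIntegrable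
    rw [huIcc]; exact (hcψ.pow 2).mul continuousOn_id
  -- expansion
  have key : Itilde n s st g G = Itilde n s st gt Gt
      + (2 * ∫ r in s..st, (Gt r + (n:ℝ)/r * gt r) *
            ((G r - Gt r) + (n:ℝ)/r * (g r - gt r)) * r)
      + ∫ r in s..st, ((G r - Gt r) + (n:ℝ)/r * (g r - gt r))^2 * r := by
    have e : (fun r => (G r + (n:ℝ)/r * g r)^2 * r)
        = fun r => (Gt r + (n:ℝ)/r * gt r)^2 * r
            + (2 * ((Gt r + (n:ℝ)/r * gt r) * ((G r - Gt r) + (n:ℝ)/r * (g r - gt r)) * r)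
               + ((G r - Gt r) + (n:ℝ)/r * (g r - gt r))^2 * r) :=
      funext fun r => by ring
    unfold Itilde
    rw [e, intervalIntegral.integral_add iψ2r ((iψδr.const_mul 2).add iδ2r),
      intervalIntegral.integral_add (iψδr.const_mul 2) iδ2r,
      intervalIntegral.integral_const_mul]
    ring
  have hC := hcross g G ⟨hrep, hGint, hG2int, hgs, hgst, hGle⟩
  have hQ : 0 ≤ ∫ r in s..st, ((G r - Gt r) + (n:ℝ)/r * (g r - gt r))^2 * r := by
    apply intervalIntegral.integral_nonneg hsst.le
    intro u hu
    exact mul_nonneg (sq_nonneg _) (le_trans hs.le hu.1)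
  constructor
  · linarith
  · intro heq
    have hQ0 : (∫ r in s..st, ((G r - Gt r) + (n:ℝ)/r * (g r - gt r))^2 * r) = 0 := by
      linarith
    -- δ = 0 a.e. on Ioc s st
    have hInt : IntegrableOn (fun r => ((G r - Gt r) + (n:ℝ)/r * (g r - gt r))^2 * r)
        (Ioc s st) volume := iδ2r.1
    rw [intervalIntegral.integral_of_le hsst.le] at hQ0
    have hnn : 0 ≤ᵐ[volume.restrict (Ioc s st)]
        fun r => ((G r - Gt r) + (n:ℝ)/r * (g r - gt r))^2 * r := by
      filter_upwards [ae_restrict_mem measurableSet_Ioc] with r hr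
      exact mul_nonneg (sq_nonneg _) (le_of_lt (hs.trans hr.1))
    have hae0 := (integral_eq_zero_iff_of_nonneg_ae hnn hInt).mp hQ0
    have hδ0 : ∀ᵐ r ∂(volume.restrict (Ioc s st)),
        (G r - Gt r) + (n:ℝ)/r * (g r - gt r) = 0 := by
      filter_upwards [hae0, ae_restrict_mem measurableSet_Ioc] with r h0 hr
      have hr0 : (0:ℝ) < r := hs.trans hr.1
      have h0' : ((G r - Gt r) + (n:ℝ)/r * (g r - gt r))^2 = 0 := by
        rcases mul_eq_zero.mp h0 with h | h
        · exact h
        · exact absurd h hr0.ne'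
      exact pow_eq_zero_iff two_ne_zero |>.mp h0'
    have hδ0' : ∀ᵐ r : ℝ, r ∈ Ioc s st →
        (G r - Gt r) + (n:ℝ)/r * (g r - gt r) = 0 :=
      (ae_restrict_iff' measurableSet_Ioc).mp hδ0
    -- the difference φ and its representation
    have hφrep : ∀ x ∈ Icc s st, g x - gt x = ∫ t in s..x, (G t - Gt t) := by
      intro x hx
      have hsub : uIcc s x ⊆ uIcc s st := uIcc_subset_uIcc left_mem_uIcc (by
        rw [huIcc]; exact hx)
      rw [hrep x hx, hrep' x hx,
        intervalIntegral.integral_sub (hGint.mono_set hsub) (hGint'.mono_set hsub)]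
      ring
    -- clamped continuous version of n/r * φ r
    set c : ℝ → ℝ := fun x => max s (min x st) with hcdef
    have hc : Continuous c := continuous_const.max (continuous_id.min continuous_const)
    have hrange : ∀ x, c x ∈ Icc s st := fun x =>
      ⟨le_max_left _ _, max_le hsst.le ((min_le_right x st))⟩
    have hceq : ∀ x ∈ Icc s st, c x = x := by
      intro x hx
      rw [hcdef]
      simp only [min_eq_left hx.2, max_eq_right hx.1]
    set h : ℝ → ℝ := fun x => (n:ℝ) / (c x) * (g (c x) - gt (c x)) with hhdef
    have hh : Continuous h := by
      apply Continuous.mul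
      · exact continuous_const.div hc (fun x => ne_of_gt (lt_of_lt_of_le hs (hrange x).1))
      · exact hcφ.comp_continuous hc hrange
    have hφeq : ∀ x ∈ Icc s st, g x - gt x = ∫ t in s..x, (- h t) := by
      intro x hx
      rw [hφrep x hx]
      apply intervalIntegral.integral_congr_ae
      filter_upwards [hδ0'] with t ht htmem
      have htIoc : t ∈ Ioc s st := by
        rw [uIoc_of_le hx.1] at htmem
        exact ⟨htmem.1, htmem.2.trans hx.2⟩
      have h1 := ht htIoc
      have hct : c t = t := hceq t ⟨htIoc.1.le, htIoc.2⟩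
      rw [hhdef]
      simp only [hct]
      linarith
    -- the primitive of -h
    have hP : ∀ x : ℝ, HasDerivAt (fun y => ∫ t in s..y, (- h t)) (- h x) x := by
      intro x
      exact intervalIntegral.integral_hasDerivAt_right (hh.neg.intervalIntegrable s x)
        hh.neg.aestronglyMeasurable.stronglyMeasurableAtFilter hh.neg.continuousAt
    set P : ℝ → ℝ := fun y => ∫ t in s..y, (- h t) with hPdef
    have hcontP : Continuous P := by
      rw [continuous_iff_continuousAt]; exact fun x => (hP x).continuousAt
    have hF0 : ∀ x ∈ Icc s st, x^n * P x = s^n * P s := by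
      apply constant_of_has_deriv_right_zero
        ((continuous_pow n).continuousOn.mul hcontP.continuousOn)
      intro x hx
      have hxIcc : x ∈ Icc s st := ⟨hx.1, hx.2.le⟩
      have hx0 : (0:ℝ) < x := lt_of_lt_of_le hs hx.1
      have hd : HasDerivAt (fun y => y^n * P y) ((n:ℝ)*x^(n-1) * P x + x^n * (- h x)) x :=
        (hasDerivAt_pow n x).mul (hP x)
      have hPx : P x = g x - gt x := (hφeq x hxIcc).symm
      have hhx : h x = (n:ℝ)/x * (g x - gt x) := by
        rw [hhdef]; simp only [hceq x hxIcc]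
      have hz : (n:ℝ)*x^(n-1) * P x + x^n * (- h x) = 0 := by
        rw [hPx, hhx]
        have hxn : x^n = x^(n-1)*x := by
          conv_lhs => rw [← Nat.sub_add_cancel hn]
          rw [pow_succ]
        rw [hxn]
        field_simp
        ring
      rw [hz] at hd
      exact hd.hasDerivWithinAt
    have hPs : P s = 0 := by rw [hPdef]; simp
    intro x hx
    have hx0 : (0:ℝ) < x := lt_of_lt_of_le hs hx.1
    have hF := hF0 x hx
    rw [hPs, mul_zero] at hF
    have hxn : x^n ≠ 0 := by positivity
    have hPx0 : P x = 0 := by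
      rcases mul_eq_zero.mp hF with hh' | hh'
      · exact absurd hh' hxn
      · exact hh'
    have hPx2 : (∫ t in s..x, - h t) = 0 := hPx0
    have hfin := hφeq x hx
    rw [hPx2] at hfin
    show g x = gt x
    linarith

lemma continuousAt_etaD {n : ℕ} {s a b t r : ℝ} (hr : r ≠ 0) :
    ContinuousAt (etaD n s a b t) r := by
  unfold etaD
  apply ContinuousAt.mul continuousAt_const
  apply ContinuousAt.sub
  · exact continuousAt_const.mul (continuousAt_zpow₀ r _ (Or.inl hr))
  · exact continuousAt_const.mul (continuousAt_zpow₀ r _ (Or.inl hr))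

lemma Adm1_congr {s st a b : ℝ} (hsst : s ≤ st) {g G G' : ℝ → ℝ}
    (h : Adm1 s st a b g G) (hE : ∀ x ∈ Icc s st, G' x = G x) : Adm1 s st a b g G' := by
  obtain ⟨hrep, hGint, hG2int, hgs, hgst, hGle⟩ := h
  have hsub : ∀ x ∈ Icc s st, uIcc s x ⊆ Icc s st := by
    intro x hx
    rw [← uIcc_of_le hsst]
    exact uIcc_subset_uIcc left_mem_uIcc (by rw [uIcc_of_le hsst]; exact hx)
  have hIoc : Ioc s st ⊆ Icc s st := Ioc_subset_Icc_self
  refine ⟨?_, ?_, ?_, hgs, hgst, ?_⟩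
  · intro x hx
    rw [hrep x hx]
    congr 1
    exact intervalIntegral.integral_congr (fun t ht => (hE t (hsub x hx ht)).symm)
  · rw [intervalIntegrable_iff_integrableOn_Ioc_of_le hsst]
    exact ((intervalIntegrable_iff_integrableOn_Ioc_of_le hsst).mp hGint).congr_fun
      (fun x hx => (hE x (hIoc hx)).symm) measurableSet_Ioc
  · rw [intervalIntegrable_iff_integrableOn_Ioc_of_le hsst]
    exact ((intervalIntegrable_iff_integrableOn_Ioc_of_le hsst).mp hG2int).congr_fun
      (fun x hx => by rw [hE x (hIoc hx)]) measurableSet_Ioc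
  · intro x hx
    rw [hE x hx]
    exact hGle x hx

lemma Itilde_congr {n : ℕ} {s st : ℝ} (hsst : s ≤ st) {g G G' : ℝ → ℝ}
    (hE : ∀ x ∈ Icc s st, G' x = G x) : Itilde n s st g G' = Itilde n s st g G := by
  unfold Itilde
  apply intervalIntegral.integral_congr
  intro r hr
  rw [uIcc_of_le hsst] at hr
  simp only [hE r hr]

lemma cross_integrable (n : ℕ) {s st : ℝ} (hs : 0 < s) (hsst : s < st)
    {g gt Gt : ℝ → ℝ} (G : ℝ → ℝ)
    (hGint : IntervalIntegrable G volume s st)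
    (hcg : ContinuousOn g (Icc s st)) (hcontg : ContinuousOn gt (Icc s st))
    (hcontG : ContinuousOn Gt (Icc s st)) :
    IntervalIntegrable
      (fun r => (Gt r + (n:ℝ)/r * gt r) * ((G r - Gt r) + (n:ℝ)/r * (g r - gt r)) * r)
      volume s st := by
  have huIcc : uIcc s st = Icc s st := uIcc_of_le hsst.le
  have hc1 : ContinuousOn (fun r : ℝ => (n:ℝ)/r) (Icc s st) :=
    continuousOn_const.div continuousOn_id (fun x hx => ne_of_gt (lt_of_lt_of_le hs hx.1))
  have hcψ : ContinuousOn (fun r => Gt r + (n:ℝ)/r * gt r) (Icc s st) :=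
    hcontG.add (hc1.mul hcontg)
  have hcφ : ContinuousOn (fun r => g r - gt r) (Icc s st) := hcg.sub hcontg
  have hcc : ContinuousOn (fun r => -Gt r + (n:ℝ)/r * (g r - gt r)) (Icc s st) :=
    hcontG.neg.add (hc1.mul hcφ)
  have e : (fun r => (Gt r + (n:ℝ)/r * gt r) * ((G r - Gt r) + (n:ℝ)/r * (g r - gt r)) * r)
      = fun r => G r * ((Gt r + (n:ℝ)/r * gt r) * r)
          + (-Gt r + (n:ℝ)/r * (g r - gt r)) * (Gt r + (n:ℝ)/r * gt r) * r :=
    funext fun r => by ring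
  rw [e]
  apply IntervalIntegrable.add
  · exact hGint.mul_continuousOn (by rw [huIcc]; exact hcψ.mul (continuousOn_id))
  · apply ContinuousOn.intervalIntegrable
    rw [huIcc]; exact (hcc.mul hcψ).mul continuousOn_id

lemma sub_rep {s st a b : ℝ} (hsst : s ≤ st) {g G gt Gt : ℝ → ℝ}
    (h1 : Adm1 s st a b g G) (h2 : Adm1 s st a b gt Gt) :
    ∀ x ∈ Icc s st, g x - gt x = ∫ t in s..x, (G t - Gt t) := by
  intro x hx
  have hsub : uIcc s x ⊆ uIcc s st :=
    uIcc_subset_uIcc left_mem_uIcc (by rw [uIcc_of_le hsst]; exact hx)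
  rw [h1.1 x hx, h2.1 x hx,
    intervalIntegral.integral_sub (h1.2.1.mono_set hsub) (h2.2.1.mono_set hsub)]
  ring

/-- with `t₀ > s` the critical radius (`η′_{t₀}(t₀) = 0`), the
function `g̃` equal to `η_{st}` if `t₀ ≥ st`, and to `η_{t₀}` on `[s,t₀]`
extended by the constant `a` on `[t₀,st]` if `t₀ < st`, is nonincreasing (in
particular if `t₀ ≥ st` then `η_{st}` is nonincreasing on `[s,st]`) and is
the unique minimizer of `Ĩ` over `𝒞₁`. (`st` stands for `s̃`.) -/
theorem stmt18 (n : ℕ) (hn : 1 ≤ n) (s st a b t₀ : ℝ)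
    (hs : 0 < s) (hsst : s < st) (ha : 0 < a) (hab : a < b)
    (ht₀ : s < t₀) (hcrit : deriv (eta n s a b t₀) t₀ = 0) :
    (st ≤ t₀ → AntitoneOn (eta n s a b st) (Icc s st)) ∧
    (∀ gtil : ℝ → ℝ,
      gtil = (fun r => if st ≤ t₀ then eta n s a b st r
                       else if r ≤ t₀ then eta n s a b t₀ r else a) →
      Adm1 s st a b gtil (deriv gtil) ∧
      (∀ g G : ℝ → ℝ, Adm1 s st a b g G →
        Itilde n s st gtil (deriv gtil) ≤ Itilde n s st g G ∧
        (Itilde n s st gtil (deriv gtil) = Itilde n s st g G → EqOn g gtil (Icc s st)))) := by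
  have ht0pos : 0 < t₀ := hs.trans ht₀
  have hη'0 : etaD n s a b t₀ t₀ = 0 := etaD_eq_zero_of_crit ht0pos.ne' hcrit
  have hAB := crit_AB hn ht0pos hη'0
  have hkey := key_scalar hn hs ht₀ hAB
  have hpos : ∀ x ∈ Icc s st, (0:ℝ) < x := fun x hx => lt_of_lt_of_le hs hx.1
  constructor
  · intro hstt0
    apply antitoneOn_of_deriv_nonpos (convex_Icc s st)
    · intro x hx
      exact (hasDerivAt_eta (hpos x hx).ne').continuousAt.continuousWithinAt
    · intro x hx
      rw [interior_Icc] at hx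
      exact (hasDerivAt_eta (ne_of_gt (hs.trans hx.1))).differentiableAt.differentiableWithinAt
    · intro x hx
      rw [interior_Icc] at hx
      rw [(hasDerivAt_eta (ne_of_gt (hs.trans hx.1))).deriv]
      exact etaD_nonpos hn hs hsst ha hab hstt0 hkey ⟨hx.1.le, hx.2.le⟩
  · intro gtil hgdef
    by_cases hcase : st ≤ t₀
    · -- CASE 1 : st ≤ t₀
      have hgtil : gtil = eta n s a b st := by
        rw [hgdef]; funext r; simp [hcase]
      set Gt : ℝ → ℝ := etaD n s a b st with hGtdef
      have hderiv : ∀ r ∈ Icc s st, HasDerivAt gtil (Gt r) r := fun r hr => by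
        rw [hgtil]; exact hasDerivAt_eta (hpos r hr).ne'
      have hcontGt : ContinuousOn Gt (Icc s st) := fun x hx =>
        (continuousAt_etaD (hpos x hx).ne').continuousWithinAt
      have hadm : Adm1 s st a b gtil Gt := by
        refine ⟨?_, ?_, ?_, ?_, ?_, ?_⟩
        · intro x hx
          have hsub : uIcc s x ⊆ Icc s st := by
            rw [← uIcc_of_le hsst.le]
            exact uIcc_subset_uIcc left_mem_uIcc (by rw [uIcc_of_le hsst.le]; exact hx)
          have hFTC := intervalIntegral.integral_eq_sub_of_hasDerivAt
            (fun y hy => hderiv y (hsub hy))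
            (ContinuousOn.intervalIntegrable (hcontGt.mono hsub))
          rw [hFTC, hgtil, eta_at_s hn hs hsst]
          ring
        · exact ContinuousOn.intervalIntegrable (by rw [uIcc_of_le hsst.le]; exact hcontGt)
        · exact ContinuousOn.intervalIntegrable
            (by rw [uIcc_of_le hsst.le]; exact hcontGt.pow 2)
        · rw [hgtil]; exact eta_at_s hn hs hsst
        · rw [hgtil]; exact eta_at_t hn hs hsst
        · intro x hx
          exact etaD_nonpos hn hs hsst ha hab hcase hkey hx
      have hcross : ∀ g G : ℝ → ℝ, Adm1 s st a b g G →
          0 ≤ ∫ r in s..st, (Gt r + (n:ℝ)/r * gtil r) *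
              ((G r - Gt r) + (n:ℝ)/r * (g r - gtil r)) * r := by
        intro g G hg
        have hχint : IntervalIntegrable (fun t => G t - Gt t) volume s st :=
          hg.2.1.sub hadm.2.1
        have hcongr : (∫ r in s..st, (Gt r + (n:ℝ)/r * gtil r) *
              ((G r - Gt r) + (n:ℝ)/r * (g r - gtil r)) * r)
            = ∫ r in s..st, (2*(n:ℝ)*etaA n s a b st) *
                (r^n * (G r - Gt r) + (n:ℝ)*r^(n-1) * (∫ t in s..r, (G t - Gt t))) := by
          apply intervalIntegral.integral_congr
          intro r hr
          rw [uIcc_of_le hsst.le] at hr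
          have hr0 : (0:ℝ) < r := hpos r hr
          have hψ : Gt r + (n:ℝ)/r * gtil r = 2*(n:ℝ)*etaA n s a b st * r^((n:ℤ)-1) := by
            rw [hgtil]; exact etaD_add_eq hr0.ne'
          have hφ : g r - gtil r = ∫ t in s..r, (G t - Gt t) := sub_rep hsst.le hg hadm r hr
          have hzp : r^((n:ℤ)-1) = r^(n-1) := by
            rw [show (n:ℤ)-1 = ((n-1 : ℕ) : ℤ) by push_cast [Nat.cast_sub hn]; ring,
              zpow_natCast]
          have hpw : r^n = r^(n-1) * r := by
            conv_lhs => rw [← Nat.sub_add_cancel hn]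
            rw [pow_succ]
          show (Gt r + (n:ℝ)/r * gtil r) * ((G r - Gt r) + (n:ℝ)/r * (g r - gtil r)) * r
              = 2*(n:ℝ)*etaA n s a b st *
                (r^n * (G r - Gt r) + (n:ℝ)*r^(n-1) * (∫ t in s..r, (G t - Gt t)))
          rw [hψ, hzp, ← hφ, hpw]
          field_simp
        rw [hcongr, intervalIntegral.integral_const_mul,
          ibp_pow n hn hsst.le _ hχint]
        have hΦst : (∫ t in s..st, (G t - Gt t)) = 0 := by
          have h := sub_rep hsst.le hg hadm st ⟨hsst.le, le_refl st⟩
          rw [hg.2.2.2.2.1, hadm.2.2.2.2.1] at h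
          linarith
        rw [hΦst]
        simp
      have hcontgtil : ContinuousOn gtil (Icc s st) := adm_continuousOn hsst.le hadm
      have hDeq : ∀ r ∈ Icc s st, deriv gtil r = Gt r := fun r hr => (hderiv r hr).deriv
      have hadm' : Adm1 s st a b gtil (deriv gtil) := Adm1_congr hsst.le hadm hDeq
      refine ⟨hadm', ?_⟩
      intro g G hg
      have hIt : Itilde n s st gtil (deriv gtil) = Itilde n s st gtil Gt :=
        Itilde_congr hsst.le hDeq
      rw [hIt]
      exact general_min n hn s st a b hs hsst gtil Gt hadm hcontgtil hcontGt hcross g G hg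
    · -- CASE 2 : t₀ < st
      have hlt : t₀ < st := not_le.mp hcase
      have h2A : 2 * etaA n s a b t₀ * t₀^n = a := two_A hn hs ht₀ hAB
      have hgtil : gtil = fun r => eta n s a b t₀ (min r t₀) := by
        rw [hgdef]; funext r
        by_cases hr : r ≤ t₀
        · simp [hcase, hr, min_eq_left hr]
        · simp [hcase, hr, min_eq_right (le_of_not_ge hr), eta_at_t hn hs ht₀]
      set Gt : ℝ → ℝ := fun r => etaD n s a b t₀ (min r t₀) with hGtdef
      have hGt_left : ∀ r, r ≤ t₀ → Gt r = etaD n s a b t₀ r := fun r hr => by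
        rw [hGtdef]; simp [min_eq_left hr]
      have hGt_right : ∀ r, t₀ ≤ r → Gt r = 0 := fun r hr => by
        rw [hGtdef]; simp [min_eq_right hr, hη'0]
      have hgtil_left : ∀ r, r ≤ t₀ → gtil r = eta n s a b t₀ r := fun r hr => by
        rw [hgtil]; simp [min_eq_left hr]
      have hgtil_right : ∀ r, t₀ ≤ r → gtil r = a := fun r hr => by
        rw [hgtil]; simp [min_eq_right hr, eta_at_t hn hs ht₀]
      have hderiv : ∀ r ∈ Icc s st, HasDerivAt gtil (Gt r) r := by
        intro r hr
        have hr0 : (0:ℝ) < r := hpos r hr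
        rcases lt_trichotomy r t₀ with h | h | h
        · have hev : gtil =ᶠ[𝓝 r] eta n s a b t₀ := by
            filter_upwards [Iio_mem_nhds h] with x hx
            exact hgtil_left x (le_of_lt hx)
          rw [hGt_left r h.le]
          exact (hasDerivAt_eta hr0.ne').congr_of_eventuallyEq hev
        · subst h
          rw [hGt_right r le_rfl]
          have hη : HasDerivAt (eta n s a b r) 0 r := by
            have h' := hasDerivAt_eta (n := n) (s := s) (a := a) (b := b) (t := r) hr0.ne'
            rwa [hη'0] at h'
          rw [hasDerivAt_iff_isLittleO] at hη ⊢
          refine Asymptotics.IsBigO.trans_isLittleO ?_ hη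
          apply Asymptotics.isBigO_of_le
          intro x
          have hgt0 : gtil r = eta n s a b r r := by
            rw [hgtil]; simp
          rw [hgt0, hgtil]
          by_cases hx : x ≤ r
          · simp [min_eq_left hx]
          · simp [min_eq_right (le_of_not_ge hx)]
        · have hev : gtil =ᶠ[𝓝 r] (fun _ => a) := by
            filter_upwards [Ioi_mem_nhds h] with x hx
            exact hgtil_right x (le_of_lt hx)
          rw [hGt_right r h.le]
          exact (hasDerivAt_const r a).congr_of_eventuallyEq hev
      have hcontGt : ContinuousOn Gt (Icc s st) := by
        intro x hx
        apply ContinuousAt.continuousWithinAt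
        have hmin : (0:ℝ) < min x t₀ := lt_min (hpos x hx) ht0pos
        have hco : ContinuousAt (fun r : ℝ => etaD n s a b t₀ (min r t₀)) x :=
          ContinuousAt.comp (g := etaD n s a b t₀) (continuousAt_etaD hmin.ne')
            (Continuous.continuousAt (continuous_id.min continuous_const))
        exact hco
      have hadm : Adm1 s st a b gtil Gt := by
        refine ⟨?_, ?_, ?_, ?_, ?_, ?_⟩
        · intro x hx
          have hsub : uIcc s x ⊆ Icc s st := by
            rw [← uIcc_of_le hsst.le]
            exact uIcc_subset_uIcc left_mem_uIcc (by rw [uIcc_of_le hsst.le]; exact hx)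
          have hFTC := intervalIntegral.integral_eq_sub_of_hasDerivAt
            (fun y hy => hderiv y (hsub hy))
            (ContinuousOn.intervalIntegrable (hcontGt.mono hsub))
          rw [hFTC, hgtil_left s ht₀.le, eta_at_s hn hs ht₀]
          ring
        · exact ContinuousOn.intervalIntegrable (by rw [uIcc_of_le hsst.le]; exact hcontGt)
        · exact ContinuousOn.intervalIntegrable
            (by rw [uIcc_of_le hsst.le]; exact hcontGt.pow 2)
        · rw [hgtil_left s ht₀.le]; exact eta_at_s hn hs ht₀
        · exact hgtil_right st hlt.le
        · intro x hx
          rcases le_or_gt x t₀ with h | h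
          · rw [hGt_left x h]
            exact etaD_nonpos hn hs ht₀ ha hab le_rfl hkey ⟨hx.1, h⟩
          · rw [hGt_right x h.le]
      have hcontgtil : ContinuousOn gtil (Icc s st) := adm_continuousOn hsst.le hadm
      have hcross : ∀ g G : ℝ → ℝ, Adm1 s st a b g G →
          0 ≤ ∫ r in s..st, (Gt r + (n:ℝ)/r * gtil r) *
              ((G r - Gt r) + (n:ℝ)/r * (g r - gtil r)) * r := by
        intro g G hg
        have hcg : ContinuousOn g (Icc s st) := adm_continuousOn hsst.le hg
        have hFint := cross_integrable n hs hsst G hg.2.1 hcg hcontgtil hcontGt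
        have hsub1 : uIcc s t₀ ⊆ uIcc s st := by
          rw [uIcc_of_le hsst.le, uIcc_of_le ht₀.le]
          exact Icc_subset_Icc le_rfl hlt.le
        have hsub2 : uIcc t₀ st ⊆ uIcc s st := by
          rw [uIcc_of_le hsst.le, uIcc_of_le hlt.le]
          exact Icc_subset_Icc ht₀.le le_rfl
        have hsplit := intervalIntegral.integral_add_adjacent_intervals
          (hFint.mono_set hsub1) (hFint.mono_set hsub2)
        rw [← hsplit]
        -- piece 1
        have hχint : IntervalIntegrable (fun t => G t - Gt t) volume s t₀ :=
          (hg.2.1.sub hadm.2.1).mono_set hsub1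
        have hp1 : (∫ r in s..t₀, (Gt r + (n:ℝ)/r * gtil r) *
              ((G r - Gt r) + (n:ℝ)/r * (g r - gtil r)) * r)
            = (n:ℝ) * (a * (g t₀ - a)) := by
          have hcongr1 : (∫ r in s..t₀, (Gt r + (n:ℝ)/r * gtil r) *
                ((G r - Gt r) + (n:ℝ)/r * (g r - gtil r)) * r)
              = ∫ r in s..t₀, (2*(n:ℝ)*etaA n s a b t₀) *
                  (r^n * (G r - Gt r) + (n:ℝ)*r^(n-1) * (∫ t in s..r, (G t - Gt t))) := by
            apply intervalIntegral.integral_congr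
            intro r hr
            rw [uIcc_of_le ht₀.le] at hr
            have hr0 : (0:ℝ) < r := lt_of_lt_of_le hs hr.1
            have hrIcc : r ∈ Icc s st := ⟨hr.1, hr.2.trans hlt.le⟩
            have hψ : Gt r + (n:ℝ)/r * gtil r
                = 2*(n:ℝ)*etaA n s a b t₀ * r^((n:ℤ)-1) := by
              rw [hGt_left r hr.2, hgtil_left r hr.2]
              exact etaD_add_eq hr0.ne'
            have hφ : g r - gtil r = ∫ t in s..r, (G t - Gt t) :=
              sub_rep hsst.le hg hadm r hrIcc
            have hzp : r^((n:ℤ)-1) = r^(n-1) := by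
              rw [show (n:ℤ)-1 = ((n-1 : ℕ) : ℤ) by push_cast [Nat.cast_sub hn]; ring,
                zpow_natCast]
            have hpw : r^n = r^(n-1) * r := by
              conv_lhs => rw [← Nat.sub_add_cancel hn]
              rw [pow_succ]
            show (Gt r + (n:ℝ)/r * gtil r) * ((G r - Gt r) + (n:ℝ)/r * (g r - gtil r)) * r
                = 2*(n:ℝ)*etaA n s a b t₀ *
                  (r^n * (G r - Gt r) + (n:ℝ)*r^(n-1) * (∫ t in s..r, (G t - Gt t)))
            rw [hψ, hzp, ← hφ, hpw]
            field_simp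
          rw [hcongr1, intervalIntegral.integral_const_mul,
            ibp_pow n hn ht₀.le _ hχint]
          have hΦt₀ : (∫ t in s..t₀, (G t - Gt t)) = g t₀ - a := by
            have h := sub_rep hsst.le hg hadm t₀ ⟨ht₀.le, hlt.le⟩
            rw [hgtil_right t₀ le_rfl] at h
            linarith
          rw [hΦt₀]
          linear_combination ((n:ℝ) * (g t₀ - a)) * h2A
        -- piece 2
        have hgcont2 : ContinuousOn (fun r => (g r - a)/r) (Icc t₀ st) := by
          apply ContinuousOn.div
          · exact (hcg.mono (Icc_subset_Icc ht₀.le le_rfl)).sub continuousOn_const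
          · exact continuousOn_id
          · exact fun x hx => ne_of_gt (lt_of_lt_of_le (hs.trans ht₀) hx.1)
        have hGint2 : IntervalIntegrable G volume t₀ st := hg.2.1.mono_set hsub2
        have hp2 : (∫ r in t₀..st, (Gt r + (n:ℝ)/r * gtil r) *
              ((G r - Gt r) + (n:ℝ)/r * (g r - gtil r)) * r)
            = (n:ℝ) * (a * (a - g t₀)) + (n:ℝ)^2 * a * ∫ r in t₀..st, (g r - a)/r := by
          have hcongr2 : (∫ r in t₀..st, (Gt r + (n:ℝ)/r * gtil r) *
                ((G r - Gt r) + (n:ℝ)/r * (g r - gtil r)) * r)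
              = ∫ r in t₀..st, ((n:ℝ) * a * G r + (n:ℝ)^2 * a * ((g r - a)/r)) := by
            apply intervalIntegral.integral_congr
            intro r hr
            rw [uIcc_of_le hlt.le] at hr
            have hr0 : (0:ℝ) < r := lt_of_lt_of_le (hs.trans ht₀) hr.1
            show (Gt r + (n:ℝ)/r * gtil r) * ((G r - Gt r) + (n:ℝ)/r * (g r - gtil r)) * r
                = (n:ℝ) * a * G r + (n:ℝ)^2 * a * ((g r - a)/r)
            rw [hGt_right r hr.1, hgtil_right r hr.1]
            field_simp
            ring
          rw [hcongr2, intervalIntegral.integral_add (hGint2.const_mul _)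
            (by apply ContinuousOn.intervalIntegrable
                rw [uIcc_of_le hlt.le]
                exact (continuousOn_const.mul hgcont2) : IntervalIntegrable
                  (fun r => (n:ℝ)^2 * a * ((g r - a)/r)) volume t₀ st),
            intervalIntegral.integral_const_mul, intervalIntegral.integral_const_mul]
          have hGval : (∫ r in t₀..st, G r) = a - g t₀ := by
            have hadj := intervalIntegral.integral_add_adjacent_intervals
              (hg.2.1.mono_set hsub1) hGint2
            have h1 := hg.1 t₀ ⟨ht₀.le, hlt.le⟩
            have h2 := hg.1 st ⟨hsst.le, le_rfl⟩
            rw [hg.2.2.2.2.1] at h2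
            linarith
          rw [hGval]
          ring
        rw [hp1, hp2]
        have hnn : 0 ≤ ∫ r in t₀..st, (g r - a)/r := by
          apply intervalIntegral.integral_nonneg hlt.le
          intro u hu
          have hu0 : (0:ℝ) < u := lt_of_lt_of_le (hs.trans ht₀) hu.1
          have huIcc : u ∈ Icc s st := ⟨(ht₀.le).trans hu.1, hu.2⟩
          have hgge : a ≤ g u := by
            have hsubu : uIcc u st ⊆ uIcc s st := by
              rw [uIcc_of_le hsst.le, uIcc_of_le hu.2]
              exact Icc_subset_Icc huIcc.1 le_rfl
            have hsubsu : uIcc s u ⊆ uIcc s st := by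
              rw [uIcc_of_le hsst.le, uIcc_of_le huIcc.1]
              exact Icc_subset_Icc le_rfl huIcc.2
            have hadj := intervalIntegral.integral_add_adjacent_intervals
              (hg.2.1.mono_set hsubsu) (hg.2.1.mono_set hsubu)
            have h1 := hg.1 u huIcc
            have h2 := hg.1 st ⟨hsst.le, le_rfl⟩
            rw [hg.2.2.2.2.1] at h2
            have hneg : (∫ t in u..st, G t) ≤ 0 := by
              have hpos' := intervalIntegral.integral_nonneg (μ := volume)
                (f := fun t => - G t) hu.2
                (fun t ht => neg_nonneg.mpr (hg.2.2.2.2.2 t ⟨huIcc.1.trans ht.1, ht.2⟩))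
              rw [intervalIntegral.integral_neg] at hpos'
              linarith
            linarith
          exact div_nonneg (by linarith) hu0.le
        have : 0 ≤ (n:ℝ)^2 * a * ∫ r in t₀..st, (g r - a)/r := by positivity
        linarith
      have hDeq : ∀ r ∈ Icc s st, deriv gtil r = Gt r := fun r hr => (hderiv r hr).deriv
      have hadm' : Adm1 s st a b gtil (deriv gtil) := Adm1_congr hsst.le hadm hDeq
      refine ⟨hadm', ?_⟩
      intro g G hg
      have hIt : Itilde n s st gtil (deriv gtil) = Itilde n s st gtil Gt :=
        Itilde_congr hsst.le hDeq
      rw [hIt]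
      exact general_min n hn s st a b hs hsst gtil Gt hadm hcontgtil hcontGt hcross g G hg

end
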